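/- On a list of two items, under the partial cost model, every request sequence σ satisfies MTFO(σ) + MTFE(σ) + TS(σ) ≤ 5·OPT(σ). -/

import Mathlib

namespace ListUpdate

variable {α : Type} [DecidableEq α]

/-- Swap the adjacent items at (0-based) positions `i` and `i+1`. -/
def adjSwap (L : List α) (i : ℕ) : List α :=
  L.take i ++ (match L.drop i with
    | a :: b :: t => b :: a :: t
    | t => t)

/-- An offline action for one request: a sequence of paid exchanges performed
before the access (each given by the position of the swapped pair), and the
target position for the free exchange performed after the access. -/
structure Action (α : Type) where
  paid : List ℕ
  target : ℕ

def doPaid (L : List α) (ps : List ℕ) : List α := ps.foldl adjSwap L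

/-- Move item `r` (for free) to position `min j (current position)`,
i.e. to any position not farther from the front. -/
def freeMove (L : List α) (r : α) (j : ℕ) : List α :=
  (L.erase r).insertIdx (min j (L.idxOf r)) r

/-- Cost of one offline step: one unit per paid exchange plus the access cost;
`c = 1` gives the full cost model, `c = 0` the partial cost model. -/
def stepCost (c : ℕ) (L : List α) (r : α) (a : Action α) : ℕ :=
  a.paid.length + ((doPaid L a.paid).idxOf r + c)

def stepList (L : List α) (r : α) (a : Action α) : List α :=
  freeMove (doPaid L a.paid) r a.target

/-- Total cost of serving the request sequence with the given actions. -/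
def serveCost (c : ℕ) : List α → List α → List (Action α) → ℕ
  | _, [], _ => 0
  | _, _ :: _, [] => 0
  | L, r :: σ, a :: as => stepCost c L r a + serveCost c (stepList L r a) σ as

/-- The list configuration after serving the requests with the given actions. -/
def serveList : List α → List α → List (Action α) → List α
  | L, [], _ => L
  | L, _ :: _, [] => L
  | L, r :: σ, a :: as => serveList (stepList L r a) σ as

/-- `optCost c L σ` : the optimal offline cost of serving `σ` starting from list `L`. -/
noncomputable def optCost (c : ℕ) (L : List α) (σ : List α) : ℕ :=
  sInf { n | ∃ as : List (Action α), as.length = σ.length ∧ serveCost c L σ as = n }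

/-- Cost of an MTF2 (move-to-front-every-other-access) algorithm: it keeps one bit
per item; on each request the requested item's bit is flipped and the item is moved
to the front exactly when the bit becomes `false` (i.e. 0). -/
def mtf2Cost (c : ℕ) : (α → Bool) → List α → List α → ℕ
  | _, _, [] => 0
  | bits, L, r :: σ =>
    (L.idxOf r + c) +
      mtf2Cost c (Function.update bits r (!bits r))
        (if !bits r then L else r :: L.erase r) σ

/-- Final list of an MTF2 algorithm. -/
def mtf2List : (α → Bool) → List α → List α → List α
  | _, L, [] => L
  | bits, L, r :: σ =>
      mtf2List (Function.update bits r (!bits r))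
        (if !bits r then L else r :: L.erase r) σ

/-- MTFO moves the requested item to the front on every odd request to it:
this is MTF2 with all bits initially 1. -/
def mtfoCost (c : ℕ) (L σ : List α) : ℕ := mtf2Cost c (fun _ => true) L σ

/-- MTFE moves the requested item to the front on every even request to it:
this is MTF2 with all bits initially 0. -/
def mtfeCost (c : ℕ) (L σ : List α) : ℕ := mtf2Cost c (fun _ => false) L σ

/-- One step of TS (Timestamp). `h` is the list of previous requests, most recent
first. The requested item `x` is inserted in front of the first item of the list
that precedes `x` and was requested at most once since the last request to `x`;
if there is no such item, or this is the first request to `x`, nothing moves. -/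
def tsStep (h : List α) (L : List α) (x : α) : List α :=
  if x ∈ h then
    let cnt : α → ℕ := fun z => (h.takeWhile (fun w => decide (w ≠ x))).count z
    let pre := L.takeWhile (fun w => decide (w ≠ x))
    let keep := pre.takeWhile (fun z => decide (2 ≤ cnt z))
    keep ++ x :: (pre.drop keep.length ++ (L.dropWhile (fun w => decide (w ≠ x))).tail)
  else L

/-- Cost of TS; `h` is the history of previous requests, most recent first
(initially `[]`). -/
def tsCost (c : ℕ) : List α → List α → List α → ℕ
  | _, _, [] => 0
  | h, L, r :: σ => (L.idxOf r + c) + tsCost c (r :: h) (tsStep h L r) σ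

/-- An online algorithm with advice: its action may depend on the advice tape and
on the sequence of requests seen so far (ending with the current request). -/
def OnlineAdviceAlg (α : Type) := (ℕ → Bool) → List α → Action α

/-- Total cost of running the online algorithm `A` with advice tape `φ`:
`past` is the reversed-free list of requests served so far (oldest first). -/
def runAdvCost (c : ℕ) (A : OnlineAdviceAlg α) (φ : ℕ → Bool) :
    List α → List α → List α → ℕ
  | _, _, [] => 0
  | past, L, r :: σ =>
      stepCost c L r (A φ (past ++ [r])) +
        runAdvCost c A φ (past ++ [r]) (stepList L r (A φ (past ++ [r]))) σ

/-- `A`, run on `σ` with tape `φ`, reads at most the first `k` bits of advice: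
its behaviour on every step of `σ` is unchanged if the tape is modified
beyond position `k`. -/
def UsesAdvice (A : OnlineAdviceAlg α) (φ : ℕ → Bool) (σ : List α) (k : ℕ) : Prop :=
  ∀ ψ : ℕ → Bool, (∀ i < k, ψ i = φ i) →
    ∀ t, 0 < t → t ≤ σ.length → A ψ (σ.take t) = A φ (σ.take t)

end ListUpdate

open ListUpdate

namespace LU2
open ListUpdate

/-- Abstract combined state of MTFO, MTFE, TS and OPT on a two-item list.
`false` encodes the item `x`, `true` the item `y`; a `Bool` "front" value `f`
encodes the list `[x, y]` (if `f = false`) or `[y, x]` (if `f = true`). -/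
structure AS where
  (fo ob0 ob1 ef eb0 eb1 tf s0 s1 : Bool)
  (h1 h2 : Option Bool)
  (z : Bool)
deriving DecidableEq

def ocost (f b : Bool) : ℕ := if f = b then 0 else 1

def tsNF (f b seen : Bool) (h1 h2 : Option Bool) : Bool :=
  if f = b then f
  else if seen = true ∧ ¬(h1 = some (!b) ∧ h2 = some (!b)) then b else f

def astep (S : AS) (b z' : Bool) : AS where
  fo := if (if b then S.ob1 else S.ob0) then b else S.fo
  ob0 := if b then S.ob0 else !S.ob0
  ob1 := if b then !S.ob1 else S.ob1
  ef := if (if b then S.eb1 else S.eb0) then b else S.ef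
  eb0 := if b then S.eb0 else !S.eb0
  eb1 := if b then !S.eb1 else S.eb1
  tf := tsNF S.tf b (if b then S.s1 else S.s0) S.h1 S.h2
  s0 := !b || S.s0
  s1 := b || S.s1
  h1 := some b
  h2 := S.h1
  z := z'

def onl (S : AS) (b : Bool) : ℕ := ocost S.fo b + ocost S.ef b + ocost S.tf b

def table : List (AS × ℕ) := [
  (⟨false, false, false, false, true, true, false, true, true, (some false), (some false), false⟩, 0),
  (⟨false, false, false, false, true, true, false, true, true, (some false), (some false), true⟩, 5),
  (⟨false, false, false, false, true, true, false, true, true, (some false), (some true), false⟩, 0),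
  (⟨false, false, false, false, true, true, false, true, true, (some false), (some true), true⟩, 4),
  (⟨false, false, false, true, true, true, true, true, true, (some false), (some true), false⟩, 2),
  (⟨false, false, false, true, true, true, true, true, true, (some false), (some true), true⟩, 2),
  (⟨false, false, true, false, true, false, false, true, false, (some false), (some false), false⟩, 0),
  (⟨false, false, true, false, true, false, false, true, false, (some false), (some false), true⟩, 5),
  (⟨false, false, true, false, true, false, false, true, false, (some false), none, false⟩, 0),
  (⟨false, false, true, false, true, false, false, true, false, (some false), none, true⟩, 5),
  (⟨false, false, true, false, true, false, false, true, true, (some false), (some false), false⟩, 0),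
  (⟨false, false, true, false, true, false, false, true, true, (some false), (some false), true⟩, 5),
  (⟨false, false, true, true, true, false, false, true, true, (some false), (some true), false⟩, 1),
  (⟨false, false, true, true, true, false, false, true, true, (some false), (some true), true⟩, 2),
  (⟨false, false, true, true, true, false, false, true, true, (some true), (some false), false⟩, 2),
  (⟨false, false, true, true, true, false, false, true, true, (some true), (some false), true⟩, 2),
  (⟨false, false, true, true, true, false, true, true, true, (some false), (some true), false⟩, 2),
  (⟨false, false, true, true, true, false, true, true, true, (some false), (some true), true⟩, 2),
  (⟨false, false, true, true, true, false, true, true, true, (some true), (some false), false⟩, 2),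
  (⟨false, false, true, true, true, false, true, true, true, (some true), (some false), true⟩, 1),
  (⟨false, true, false, false, false, true, false, true, true, (some false), (some false), false⟩, 0),
  (⟨false, true, false, false, false, true, false, true, true, (some false), (some false), true⟩, 5),
  (⟨false, true, true, false, false, false, false, false, false, none, none, false⟩, 0),
  (⟨false, true, true, false, false, false, false, true, false, (some false), (some false), false⟩, 0),
  (⟨false, true, true, false, false, false, false, true, false, (some false), (some false), true⟩, 5),
  (⟨false, true, true, false, false, false, false, true, true, (some false), (some false), false⟩, 0),
  (⟨false, true, true, false, false, false, false, true, true, (some false), (some false), true⟩, 5),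
  (⟨false, true, true, false, false, false, false, true, true, (some false), (some true), false⟩, 0),
  (⟨false, true, true, false, false, false, false, true, true, (some false), (some true), true⟩, 4),
  (⟨false, true, true, true, false, false, false, true, true, (some true), (some false), false⟩, 2),
  (⟨false, true, true, true, false, false, false, true, true, (some true), (some false), true⟩, 2),
  (⟨true, false, false, false, true, true, false, true, true, (some true), (some false), false⟩, 2),
  (⟨true, false, false, false, true, true, false, true, true, (some true), (some false), true⟩, 2),
  (⟨true, false, false, true, true, true, true, true, true, (some true), (some false), false⟩, 4),
  (⟨true, false, false, true, true, true, true, true, true, (some true), (some false), true⟩, 0),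
  (⟨true, false, false, true, true, true, true, true, true, (some true), (some true), false⟩, 5),
  (⟨true, false, false, true, true, true, true, true, true, (some true), (some true), true⟩, 0),
  (⟨true, false, true, true, true, false, true, true, true, (some true), (some true), false⟩, 5),
  (⟨true, false, true, true, true, false, true, true, true, (some true), (some true), true⟩, 0),
  (⟨true, true, false, false, false, true, false, false, true, (some true), none, false⟩, 2),
  (⟨true, true, false, false, false, true, false, false, true, (some true), none, true⟩, 2),
  (⟨true, true, false, false, false, true, false, true, true, (some false), (some true), false⟩, 1),
  (⟨true, true, false, false, false, true, false, true, true, (some false), (some true), true⟩, 2),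
  (⟨true, true, false, false, false, true, false, true, true, (some true), (some false), false⟩, 2),
  (⟨true, true, false, false, false, true, false, true, true, (some true), (some false), true⟩, 2),
  (⟨true, true, false, false, false, true, true, true, true, (some false), (some true), false⟩, 2),
  (⟨true, true, false, false, false, true, true, true, true, (some false), (some true), true⟩, 2),
  (⟨true, true, false, false, false, true, true, true, true, (some true), (some false), false⟩, 2),
  (⟨true, true, false, false, false, true, true, true, true, (some true), (some false), true⟩, 1),
  (⟨true, true, false, true, false, true, true, false, true, (some true), (some true), false⟩, 5),
  (⟨true, true, false, true, false, true, true, false, true, (some true), (some true), true⟩, 0),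
  (⟨true, true, false, true, false, true, true, true, true, (some true), (some true), false⟩, 5),
  (⟨true, true, false, true, false, true, true, true, true, (some true), (some true), true⟩, 0),
  (⟨true, true, true, false, false, false, true, true, true, (some false), (some true), false⟩, 2),
  (⟨true, true, true, false, false, false, true, true, true, (some false), (some true), true⟩, 2),
  (⟨true, true, true, true, false, false, true, false, true, (some true), (some true), false⟩, 5),
  (⟨true, true, true, true, false, false, true, false, true, (some true), (some true), true⟩, 0),
  (⟨true, true, true, true, false, false, true, true, true, (some true), (some false), false⟩, 4),
  (⟨true, true, true, true, false, false, true, true, true, (some true), (some false), true⟩, 0),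
  (⟨true, true, true, true, false, false, true, true, true, (some true), (some true), false⟩, 5),
  (⟨true, true, true, true, false, false, true, true, true, (some true), (some true), true⟩, 0)
]

def Reach : List AS := table.map Prod.fst

def Phi (s : AS) : ℕ := ((table.find? fun p => decide (p.1 = s)).map Prod.snd).getD 0

def S0 : AS := ⟨false, true, true, false, false, false, false, false, false, none, none, false⟩

theorem key : ∀ S ∈ Reach, ∀ b : Bool,
    ((S.z = b → astep S b S.z ∈ Reach ∧ onl S b + Phi (astep S b S.z) ≤ Phi S)) ∧
    (∀ z', astep S b z' ∈ Reach ∧ onl S b + Phi (astep S b z') ≤ 5 + Phi S) := by decide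

section Conc
variable {α : Type} [DecidableEq α] (x y : α)

def listOf (b : Bool) : List α := if b then [y, x] else [x, y]
def itm (b : Bool) : α := if b then y else x


lemma itm_not (b : Bool) : itm x y (!b) = (if b then x else y) := by cases b <;> rfl

lemma idx_itm (hxy : x ≠ y) (f b : Bool) : (listOf x y f).idxOf (itm x y b) = ocost f b := by
  have hb : (x == y) = false := by simpa using hxy
  have hb' : (y == x) = false := by simpa using hxy.symm
  cases f <;> cases b <;> simp [listOf, itm, ocost, List.idxOf_cons, hb, hb']

lemma erase_itm (hxy : x ≠ y) (f b : Bool) : (listOf x y f).erase (itm x y b) = [itm x y (!b)] := by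
  cases f <;> cases b <;> simp [listOf, itm, List.erase_cons, hxy, hxy.symm]

lemma cons_erase (hxy : x ≠ y) (f b : Bool) :
    itm x y b :: (listOf x y f).erase (itm x y b) = listOf x y b := by
  rw [erase_itm x y hxy]; cases b <;> rfl

lemma mtf2_cons (hxy : x ≠ y) (bits : α → Bool) (f b : Bool) (σ : List α) :
    mtf2Cost 0 bits (listOf x y f) (itm x y b :: σ)
      = ocost f b + mtf2Cost 0 (Function.update bits (itm x y b) (!bits (itm x y b)))
          (listOf x y (if bits (itm x y b) then b else f)) σ := by
  simp only [mtf2Cost, idx_itm x y hxy, Nat.add_zero]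
  cases hb : bits (itm x y b) <;>
    simp [hb, cons_erase x y hxy]

lemma update_at_x (hxy : x ≠ y) (bits : α → Bool) (b : Bool) (v : Bool) :
    (Function.update bits (itm x y b) v) x = if b then bits x else v := by
  cases b <;> simp [itm, Function.update_of_ne hxy]

lemma update_at_y (hxy : x ≠ y) (bits : α → Bool) (b : Bool) (v : Bool) :
    (Function.update bits (itm x y b) v) y = if b then v else bits y := by
  cases b <;> simp [itm, Function.update_of_ne hxy.symm]

def h2of (h : List α) : Option Bool × Option Bool :=
  match h with
  | [] => (none, none)
  | [a] => (some (decide (a = y)), none)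
  | a :: c :: _ => (some (decide (a = y)), some (decide (c = y)))

lemma h2of_fst (a : α) (t : List α) : (h2of y (a :: t)).1 = some (decide (a = y)) := by
  cases t <;> rfl

lemma h2of_cons (hxy : x ≠ y) (b : Bool) (h : List α) :
    h2of y (itm x y b :: h) = (some b, (h2of y h).1) := by
  cases h with
  | nil => cases b <;> simp [h2of, itm, hxy]
  | cons c t =>
    have h1 : (h2of y (itm x y b :: c :: t)).1 = some (decide (itm x y b = y)) := h2of_fst y _ _
    have h2 : (h2of y (itm x y b :: c :: t)).2 = some (decide (c = y)) := rfl
    have h3 : (h2of y (c :: t)).1 = some (decide (c = y)) := h2of_fst y _ _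
    have hb : decide (itm x y b = y) = b := by cases b <;> simp [itm, hxy]
    rw [Prod.ext_iff, h1, h2, h3, hb]
    exact ⟨rfl, rfl⟩

lemma mem_cons_x (hxy : x ≠ y) (b : Bool) (h : List α) :
    decide (x ∈ itm x y b :: h) = (!b || decide (x ∈ h)) := by
  cases b <;> simp [itm, hxy]

lemma mem_cons_y (hxy : x ≠ y) (b : Bool) (h : List α) :
    decide (y ∈ itm x y b :: h) = (b || decide (y ∈ h)) := by
  cases b <;> simp [itm, hxy.symm]

lemma itm_mem (b : Bool) (h : List α) :
    itm x y b ∈ h ↔ (if b then decide (y ∈ h) else decide (x ∈ h)) = true := by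
  cases b <;> simp [itm]

lemma cnt_iff (hxy : x ≠ y) (b : Bool) (h : List α) (hall : ∀ r ∈ h, r = x ∨ r = y) :
    (2 ≤ (h.takeWhile (fun w => decide (w ≠ itm x y b))).count (itm x y (!b)))
      ↔ ((h2of y h).1 = some (!b) ∧ (h2of y h).2 = some (!b)) := by
  match h with
  | [] => simp [h2of]
  | [a] =>
    rcases hall a (by simp) with rfl | rfl <;> cases b <;>
      simp [h2of, itm, hxy, hxy.symm, List.takeWhile, List.count_cons]
  | a :: c :: t =>
    rcases hall a (by simp) with rfl | rfl <;> rcases hall c (by simp) with rfl | rfl <;>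
      cases b <;>
      simp [h2of, itm, hxy, hxy.symm, List.takeWhile, List.count_cons] <;> omega

lemma tsStep_eq (hxy : x ≠ y) (f b : Bool) (h : List α) (hall : ∀ r ∈ h, r = x ∨ r = y) :
    tsStep h (listOf x y f) (itm x y b)
      = listOf x y (tsNF f b (if b then decide (y ∈ h) else decide (x ∈ h))
          (h2of y h).1 (h2of y h).2) := by
  by_cases hm : itm x y b ∈ h
  · by_cases hc : 2 ≤ ((h.takeWhile (fun w => decide (w ≠ itm x y b))).count (itm x y (!b)))
    · have hpair := (cnt_iff x y hxy b h hall).mp hc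
      have hseen := (itm_mem x y b h).mp hm
      cases b <;> cases f <;>
        simp_all [tsStep, tsNF, listOf, itm, hxy, hxy.symm, List.takeWhile, List.dropWhile]
    · have hpair : ¬ ((h2of y h).1 = some (!b) ∧ (h2of y h).2 = some (!b)) :=
        fun hp => hc ((cnt_iff x y hxy b h hall).mpr hp)
      have hseen := (itm_mem x y b h).mp hm
      cases b <;> cases f <;>
        simp_all [tsStep, tsNF, listOf, itm, hxy, hxy.symm, List.takeWhile, List.dropWhile]
  · have hseen : (if b then decide (y ∈ h) else decide (x ∈ h)) = false := by
      rcases Bool.eq_false_or_eq_true (if b then decide (y ∈ h) else decide (x ∈ h)) with h' | h'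
      · exact absurd ((itm_mem x y b h).mpr h') hm
      · exact h' 
    cases b <;> cases f <;>
      simp_all [tsStep, tsNF, listOf, itm, hxy, hxy.symm]

lemma ts_cons (hxy : x ≠ y) (f b : Bool) (h : List α) (hall : ∀ r ∈ h, r = x ∨ r = y) (σ : List α) :
    tsCost 0 h (listOf x y f) (itm x y b :: σ)
      = ocost f b + tsCost 0 (itm x y b :: h)
          (listOf x y (tsNF f b (if b then decide (y ∈ h) else decide (x ∈ h))
            (h2of y h).1 (h2of y h).2)) σ := by
  simp only [tsCost, idx_itm x y hxy, Nat.add_zero, tsStep_eq x y hxy f b h hall]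

lemma adjSwap_two (z : Bool) (i : ℕ) : ∃ w, adjSwap (listOf x y z) i = listOf x y w := by
  match i with
  | 0 => exact ⟨!z, by cases z <;> rfl⟩
  | 1 => exact ⟨z, by cases z <;> rfl⟩
  | (n+2) =>
    refine ⟨z, ?_⟩
    have h1 : (listOf x y z).take (n+2) = listOf x y z :=
      List.take_of_length_le (by cases z <;> simp [listOf])
    have h2 : (listOf x y z).drop (n+2) = [] :=
      List.drop_eq_nil_of_le (by cases z <;> simp [listOf])
    simp [adjSwap, h1, h2]

lemma doPaid_two (ps : List ℕ) : ∀ z : Bool, ∃ w, doPaid (listOf x y z) ps = listOf x y w := by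
  induction ps with
  | nil => exact fun z => ⟨z, rfl⟩
  | cons i ps ih =>
    intro z
    obtain ⟨w, hw⟩ := adjSwap_two x y z i
    have : doPaid (listOf x y z) (i :: ps) = doPaid (adjSwap (listOf x y z) i) ps := rfl
    rw [this, hw]; exact ih w

lemma freeMove_two (hxy : x ≠ y) (w b : Bool) (t : ℕ) :
    ∃ u, freeMove (listOf x y w) (itm x y b) t = listOf x y u := by
  unfold freeMove
  rw [erase_itm x y hxy, idx_itm x y hxy]
  have h1 : ocost w b ≤ 1 := by cases w <;> cases b <;> simp [ocost]
  have h2 : min t (ocost w b) ≤ 1 := le_trans (Nat.min_le_right t _) h1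
  rcases Nat.le_one_iff_eq_zero_or_eq_one.mp h2 with h | h <;> rw [h]
  · exact ⟨b, by cases b <;> rfl⟩
  · exact ⟨!b, by cases b <;> rfl⟩

lemma stepList_two (hxy : x ≠ y) (z b : Bool) (a : Action α) :
    ∃ u, stepList (listOf x y z) (itm x y b) a = listOf x y u := by
  unfold stepList
  obtain ⟨w, hw⟩ := doPaid_two x y a.paid z
  rw [hw]; exact freeMove_two x y hxy w b a.target

lemma stepCost_zero (hxy : x ≠ y) (z b : Bool) (a : Action α)
    (h0 : stepCost 0 (listOf x y z) (itm x y b) a = 0) :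
    z = b ∧ stepList (listOf x y z) (itm x y b) a = listOf x y z := by
  unfold stepCost at h0
  have hp : a.paid = [] := List.length_eq_zero_iff.mp (by omega)
  rw [hp] at h0
  have hd : doPaid (listOf x y z) ([] : List ℕ) = listOf x y z := rfl
  rw [hd] at h0
  rw [idx_itm x y hxy] at h0
  have hzb : z = b := by
    by_contra hne
    simp [ocost, hne] at h0
  have hidx0 : ocost z b = 0 := by simp [ocost, hzb]
  constructor
  · exact hzb
  · unfold stepList
    rw [hp, hd]
    unfold freeMove
    rw [erase_itm x y hxy, idx_itm x y hxy, hidx0, Nat.min_zero]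
    subst hzb
    cases z <;> rfl

lemma listOf_inj (hxy : x ≠ y) {u v : Bool} (h : listOf x y u = listOf x y v) : u = v := by
  cases u <;> cases v
  · rfl
  · exfalso; simp [listOf] at h; exact hxy h.1
  · exfalso; simp [listOf] at h; exact hxy h.1.symm
  · rfl

lemma master (hxy : x ≠ y) :
    ∀ (σ : List α), (∀ r ∈ σ, r = x ∨ r = y) →
    ∀ (S : AS), S ∈ Reach →
    ∀ (bo be : α → Bool) (h : List α) (as : List (Action α)),
      bo x = S.ob0 → bo y = S.ob1 → be x = S.eb0 → be y = S.eb1 →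
      (∀ r ∈ h, r = x ∨ r = y) → S.s0 = decide (x ∈ h) → S.s1 = decide (y ∈ h) →
      S.h1 = (h2of y h).1 → S.h2 = (h2of y h).2 →
      as.length = σ.length →
      mtf2Cost 0 bo (listOf x y S.fo) σ + mtf2Cost 0 be (listOf x y S.ef) σ
        + tsCost 0 h (listOf x y S.tf) σ
        ≤ 5 * serveCost 0 (listOf x y S.z) σ as + Phi S := by
  intro σ
  induction σ with
  | nil => intro _ S _ bo be h as _ _ _ _ _ _ _ _ _ _; simp [mtf2Cost, tsCost]
  | cons r σ ih =>
    intro hσ S hS bo be h as hbo0 hbo1 hbe0 hbe1 hall hs0 hs1 hh1 hh2 hlen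
    obtain ⟨b, rfl⟩ : ∃ b, r = itm x y b := by
      rcases hσ r (by simp) with rfl | rfl
      · exact ⟨false, rfl⟩
      · exact ⟨true, rfl⟩
    obtain ⟨a, as, rfl⟩ : ∃ a as', as = a :: as' := by
      cases as with
      | nil => simp at hlen
      | cons a t => exact ⟨a, t, rfl⟩
    have hlen' : as.length = σ.length := by simpa using hlen
    rw [mtf2_cons x y hxy bo S.fo b σ, mtf2_cons x y hxy be S.ef b σ,
        ts_cons x y hxy S.tf b h hall σ]
    have hbob : bo (itm x y b) = (if b then S.ob1 else S.ob0) := by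
      cases b <;> simp [itm, hbo0, hbo1]
    have hbeb : be (itm x y b) = (if b then S.eb1 else S.eb0) := by
      cases b <;> simp [itm, hbe0, hbe1]
    have hseen : (if b then decide (y ∈ h) else decide (x ∈ h)) = (if b then S.s1 else S.s0) := by
      cases b <;> simp [hs0, hs1]
    rw [hbob, hbeb, hseen, ← hh1, ← hh2]
    have hserve : serveCost 0 (listOf x y S.z) (itm x y b :: σ) (a :: as)
        = stepCost 0 (listOf x y S.z) (itm x y b) a
          + serveCost 0 (stepList (listOf x y S.z) (itm x y b) a) σ as := rfl
    rw [hserve]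
    obtain ⟨z', hz'⟩ := stepList_two x y hxy S.z b a
    rw [hz']
    have hσ' : ∀ r ∈ σ, r = x ∨ r = y := fun r hr => hσ r (List.mem_cons_of_mem _ hr)
    -- links for the next state
    have hall' : ∀ r ∈ itm x y b :: h, r = x ∨ r = y := by
      intro r hr
      rcases List.mem_cons.mp hr with rfl | hr
      · cases b
        · exact Or.inl rfl
        · exact Or.inr rfl
      · exact hall r hr
    have hob0 : (Function.update bo (itm x y b) (!(if b then S.ob1 else S.ob0))) x = (astep S b z').ob0 := by
      cases b <;> simp [astep, itm, Function.update_of_ne hxy, hbo0, hbo1]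
    have hob1 : (Function.update bo (itm x y b) (!(if b then S.ob1 else S.ob0))) y = (astep S b z').ob1 := by
      cases b <;> simp [astep, itm, Function.update_of_ne hxy.symm, hbo0, hbo1]
    have heb0 : (Function.update be (itm x y b) (!(if b then S.eb1 else S.eb0))) x = (astep S b z').eb0 := by
      cases b <;> simp [astep, itm, Function.update_of_ne hxy, hbe0, hbe1]
    have heb1 : (Function.update be (itm x y b) (!(if b then S.eb1 else S.eb0))) y = (astep S b z').eb1 := by
      cases b <;> simp [astep, itm, Function.update_of_ne hxy.symm, hbe0, hbe1]
    have hs0' : (astep S b z').s0 = decide (x ∈ itm x y b :: h) := by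
      rw [mem_cons_x x y hxy b h, ← hs0]; rfl
    have hs1' : (astep S b z').s1 = decide (y ∈ itm x y b :: h) := by
      rw [mem_cons_y x y hxy b h, ← hs1]; rfl
    have hh1' : (astep S b z').h1 = (h2of y (itm x y b :: h)).1 := by
      rw [h2of_cons x y hxy b h]; rfl
    have hh2' : (astep S b z').h2 = (h2of y (itm x y b :: h)).2 := by
      rw [h2of_cons x y hxy b h, ← hh1]; rfl
    rcases Nat.eq_zero_or_pos (stepCost 0 (listOf x y S.z) (itm x y b) a) with h0 | hpos
    · obtain ⟨hzb, hLz⟩ := stepCost_zero x y hxy S.z b a h0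
      have hz'' : z' = S.z := listOf_inj x y hxy (hz' ▸ hLz)
      subst hz''
      obtain ⟨hreach, hineq⟩ := (key S hS b).1 hzb
      have hIH : mtf2Cost 0 (Function.update bo (itm x y b) (!(if b then S.ob1 else S.ob0)))
            (listOf x y (if (if b then S.ob1 else S.ob0) then b else S.fo)) σ
          + mtf2Cost 0 (Function.update be (itm x y b) (!(if b then S.eb1 else S.eb0)))
            (listOf x y (if (if b then S.eb1 else S.eb0) then b else S.ef)) σ
          + tsCost 0 (itm x y b :: h)
            (listOf x y (tsNF S.tf b (if b then S.s1 else S.s0) S.h1 S.h2)) σ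
          ≤ 5 * serveCost 0 (listOf x y S.z) σ as + Phi (astep S b S.z) :=
        ih hσ' (astep S b S.z) hreach _ _ _ as hob0 hob1 heb0 heb1 hall' hs0' hs1' hh1' hh2' hlen'
      have honl : ocost S.fo b + ocost S.ef b + ocost S.tf b + Phi (astep S b S.z) ≤ Phi S := by
        simpa [onl] using hineq
      rw [h0]
      omega
    · obtain ⟨hreach, hineq⟩ := (key S hS b).2 z'
      have hIH : mtf2Cost 0 (Function.update bo (itm x y b) (!(if b then S.ob1 else S.ob0)))
            (listOf x y (if (if b then S.ob1 else S.ob0) then b else S.fo)) σ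
          + mtf2Cost 0 (Function.update be (itm x y b) (!(if b then S.eb1 else S.eb0)))
            (listOf x y (if (if b then S.eb1 else S.eb0) then b else S.ef)) σ
          + tsCost 0 (itm x y b :: h)
            (listOf x y (tsNF S.tf b (if b then S.s1 else S.s0) S.h1 S.h2)) σ
          ≤ 5 * serveCost 0 (listOf x y z') σ as + Phi (astep S b z') :=
        ih hσ' (astep S b z') hreach _ _ _ as hob0 hob1 heb0 heb1 hall' hs0' hs1' hh1' hh2' hlen'
      have honl : ocost S.fo b + ocost S.ef b + ocost S.tf b + Phi (astep S b z') ≤ 5 + Phi S := by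
        simpa [onl] using hineq
      omega

end Conc

end LU2


/-- On a list of two items, under the partial cost model,
`MTFO(σ) + MTFE(σ) + TS(σ) ≤ 5·OPT(σ)` for every request sequence `σ`. -/
theorem sum_of_three_le_five_opt {α : Type} [DecidableEq α] (x y : α) (hxy : x ≠ y)
    (σ : List α) (hσ : ∀ r ∈ σ, r = x ∨ r = y) :
    mtfoCost 0 [x, y] σ + mtfeCost 0 [x, y] σ + tsCost 0 [] [x, y] σ ≤
      5 * optCost 0 [x, y] σ := by
  have hne : {n | ∃ as : List (Action α), as.length = σ.length ∧ serveCost 0 [x, y] σ as = n}.Nonempty :=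
    ⟨serveCost 0 [x, y] σ (List.replicate σ.length ⟨[], 0⟩),
      List.replicate σ.length ⟨[], 0⟩, by simp, rfl⟩
  obtain ⟨as, hlen, hcost⟩ := Nat.sInf_mem hne
  have hopt : optCost 0 [x, y] σ = serveCost 0 [x, y] σ as := hcost.symm
  have h := LU2.master x y hxy σ hσ LU2.S0 (by decide) (fun _ => true) (fun _ => false) [] as
    rfl rfl rfl rfl (by simp) (by simp [LU2.S0]) (by simp [LU2.S0]) rfl rfl hlen
  have hphi : LU2.Phi LU2.S0 = 0 := by decide
  rw [hphi] at h
  rw [hopt]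
  simpa [mtfoCost, mtfeCost, LU2.listOf, LU2.S0] using h
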